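/- For every prime p ≥ 3, the polynomials P_{1,p}(z) and P_{2,p}(z) are coprime in 𝔽_p[z]. -/

import Mathlib

open Polynomial

/-- For every prime `p ≥ 3`, the truncations `P_{1,p}` and `P_{2,p}` in degrees `< p` of
`f₁|_p` and `f₂|_p` are coprime in `𝔽_p[z]`. -/
theorem stmt13 (p : ℕ) (hp : p.Prime) (hp3 : 3 ≤ p)
    (a : ℕ → ℤ)
    (ha : ∀ n : ℕ, (a n : ℚ) =
      ((-1 : ℚ) / (2 * (n : ℚ) - 1)) * (Nat.choose (2 * n) n : ℚ) ^ 2)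
    (P₁p P₂p : Polynomial (ZMod p))
    (hP₁p : P₁p = ∑ n ∈ Finset.range p,
      Polynomial.C (((Nat.choose (2 * n) n : ZMod p)) ^ 2) * Polynomial.X ^ n)
    (hP₂p : P₂p = ∑ n ∈ Finset.range p, Polynomial.C ((a n : ZMod p)) * Polynomial.X ^ n) :
    IsCoprime P₁p P₂p := by
  haveI : Fact p.Prime := ⟨hp⟩
  set c : ℕ → ℤ := fun n => ((2 * n).choose n : ℤ) with hc
  -- basic integer identity coming from `ha`
  have key : ∀ n : ℕ, (2 * (n : ℤ) - 1) * a n = -(c n) ^ 2 := by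
    intro n
    have hne : (2 * (n : ℚ) - 1) ≠ 0 := by
      intro h
      have h2 : (2 * (n : ℚ)) = 1 := by linarith
      have : ((2 * n : ℕ) : ℚ) = ((1 : ℕ) : ℚ) := by push_cast; linarith
      have := Nat.cast_injective this
      omega
    have h := ha n
    rw [div_mul_eq_mul_div, eq_div_iff hne] at h
    have h2 : ((2 * (n : ℤ) - 1) * a n : ℚ) = ((-(c n) ^ 2 : ℤ) : ℚ) := by
      push_cast
      linear_combination h
    exact_mod_cast h2
  have ha0 : a 0 = 1 := by
    have := key 0
    simp [hc] at this
    omega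
  -- the hypergeometric recurrence for `a`
  have hcrec : ∀ n : ℕ, ((n : ℤ) + 1) * c (n + 1) = 2 * (2 * n + 1) * c n := by
    intro n
    have h := congrArg (Nat.cast : ℕ → ℤ) (Nat.succ_mul_centralBinom_succ n)
    simp only [Nat.centralBinom] at h
    push_cast at h
    simp only [hc]
    push_cast
    linarith
  have hrec : ∀ n : ℕ, ((n : ℤ) + 1) ^ 2 * a (n + 1) = (16 * (n : ℤ) ^ 2 - 4) * a n := by
    intro n
    have k1 := key (n + 1)
    have k2 := key n
    have hcn := hcrec n
    push_cast at k1
    apply mul_left_cancel₀ (show (2 * (n : ℤ) + 1) ≠ 0 by positivity)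
    linear_combination ((n : ℤ) + 1) ^ 2 * k1 - (4 * (2 * (n : ℤ) + 1) ^ 2) * k2
      - (((n : ℤ) + 1) * (c (n + 1)) + 2 * (2 * (n : ℤ) + 1) * (c n)) * hcn
  -- `p` divides the top coefficient `a (p-1)`
  have hdvda : (p : ℤ) ∣ a (p - 1) := by
    have hcd : (p : ℤ) ∣ c (p - 1) := by
      have h1 : p ∣ ((p - 1) + (p - 1)).choose (p - 1) :=
        hp.dvd_choose_add (by omega) (by omega) (by omega)
      have h2 : 2 * (p - 1) = (p - 1) + (p - 1) := by omega
      rw [hc]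
      simp only [h2]
      exact_mod_cast Int.natCast_dvd_natCast.mpr h1
    by_cases hp' : p = 3
    · subst hp'
      have h2 := key 2
      have hc2 : c 2 = 6 := by
        simp only [hc]
        norm_num [show (4 : ℕ).choose 2 = 6 from by decide]
      rw [hc2] at h2
      norm_num at h2
      show ((3 : ℕ) : ℤ) ∣ a 2
      omega
    · have hpZ : Prime (p : ℤ) := Nat.prime_iff_prime_int.1 hp
      have hN : ((p - 1 : ℕ) : ℤ) = (p : ℤ) - 1 := by
        have : (1 : ℕ) ≤ p := by omega
        push_cast [this]
        ring
      have hdd : (p : ℤ) ∣ (2 * ((p - 1 : ℕ) : ℤ) - 1) * a (p - 1) := by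
        rw [key]
        exact dvd_neg.mpr (dvd_pow hcd two_ne_zero)
      rcases hpZ.dvd_mul.mp hdd with h | h
      · exfalso
        rw [hN] at h
        have h3 : (p : ℤ) ∣ 3 := by
          have h5 : (p : ℤ) ∣ 2 * (p : ℤ) := dvd_mul_left _ _
          have h6 := dvd_sub h5 h
          have h4 : 2 * (p : ℤ) - (2 * ((p : ℤ) - 1) - 1) = 3 := by ring
          rwa [h4] at h6
        have := Int.le_of_dvd (by norm_num) h3
        omega
      · exact h
  -- nonzero scalars
  have hne0 : ∀ k : ℕ, 0 < k → k < p → ((k : ZMod p)) ≠ 0 := by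
    intro k h1 h2 h
    rw [ZMod.natCast_eq_zero_iff] at h
    exact absurd (Nat.le_of_dvd h1 h) (by omega)
  have h2ne : (2 : ZMod p) ≠ 0 := by
    have := hne0 2 (by omega) (by omega)
    exact_mod_cast this
  have h16ne : (16 : ZMod p) ≠ 0 := by
    intro h
    have h' : ((16 : ℕ) : ZMod p) = 0 := by exact_mod_cast h
    rw [ZMod.natCast_eq_zero_iff] at h'
    have : p ∣ 2 ^ 4 := by norm_num at h' ⊢; exact h'
    have := Nat.le_of_dvd (by omega) (hp.dvd_of_dvd_pow this)
    omega
  -- coefficients of the truncations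
  have hA2 : ∀ m : ℕ, P₂p.coeff m = if m < p then ((a m : ZMod p)) else 0 := by
    intro m
    rw [hP₂p, finset_sum_coeff]
    simp only [coeff_C_mul, coeff_X_pow, mul_ite, mul_one, mul_zero]
    rw [Finset.sum_ite_eq (Finset.range p) m fun n => ((a n : ZMod p))]
    simp [Finset.mem_range]
  have hA1 : ∀ m : ℕ, P₁p.coeff m =
      if m < p then (((2 * m).choose m : ZMod p)) ^ 2 else 0 := by
    intro m
    rw [hP₁p, finset_sum_coeff]
    simp only [coeff_C_mul, coeff_X_pow, mul_ite, mul_one, mul_zero]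
    rw [Finset.sum_ite_eq (Finset.range p) m fun n => (((2 * n).choose n : ZMod p)) ^ 2]
    simp [Finset.mem_range]
  have hP₂0 : P₂p.coeff 0 = 1 := by
    rw [hA2, if_pos (by omega), ha0]; norm_num
  have hP₂ne : P₂p ≠ 0 := fun h => by simp [h] at hP₂0
  have hdegP₂ : P₂p.natDegree < p := by
    rw [natDegree_lt_iff_degree_lt hP₂ne, degree_lt_iff_coeff_zero]
    intro m hm
    rw [hA2, if_neg]
    exact fun hcm => absurd hm (by rw [not_le]; exact_mod_cast hcm)
  -- the relation P₁ = P₂ - 2 X P₂'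
  have hrel : P₁p = P₂p - C 2 * (derivative P₂p * X) := by
    ext m
    rcases m with _ | n
    · simp only [coeff_sub, coeff_C_mul, mul_coeff_zero, coeff_X_zero, mul_zero]
      rw [hA1, hA2, if_pos (by omega), if_pos (by omega)]
      simp [ha0]
    · rw [coeff_sub, coeff_C_mul, coeff_mul_X, coeff_derivative, hA1, hA2]
      by_cases h : n + 1 < p
      · rw [if_pos h, if_pos h]
        have hk := key (n + 1)
        have hzk : ((2 * ((n : ℤ) + 1) - 1) * a (n + 1) : ZMod p)
            = ((-(((2 * (n + 1)).choose (n + 1) : ℤ)) ^ 2 : ℤ) : ZMod p) := by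
          exact_mod_cast congrArg (Int.cast : ℤ → ZMod p) (by push_cast; exact_mod_cast hk)
        push_cast at hzk ⊢
        linear_combination hzk
      · rw [if_neg h, if_neg h]
        ring
  -- master coefficient recurrence
  have hmaster : ∀ m : ℕ, ((m : ZMod p) + 1) ^ 2 * P₂p.coeff (m + 1)
      + (4 - 16 * (m : ZMod p) ^ 2) * P₂p.coeff m = 0 := by
    intro m
    by_cases h1 : m + 1 < p
    · rw [hA2, hA2, if_pos h1, if_pos (by omega)]
      have hk := hrec m
      have hzk := congrArg (Int.cast : ℤ → ZMod p) hk
      push_cast at hzk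
      linear_combination hzk
    · by_cases h2 : m + 1 = p
      · rw [hA2, hA2, if_neg (by omega), if_pos (by omega)]
        have hm0 : (m : ZMod p) + 1 = 0 := by
          have : ((m + 1 : ℕ) : ZMod p) = 0 := by rw [h2]; exact ZMod.natCast_self p
          push_cast at this
          exact this
        have ham : ((a m : ZMod p)) = 0 := by
          have hm : m = p - 1 := by omega
          rw [hm]
          exact (ZMod.intCast_zmod_eq_zero_iff_dvd _ _).mpr hdvda
        rw [hm0, ham]
        ring
      · rw [hA2, hA2, if_neg (by omega), if_neg (by omega)]
        ring
  -- the ODE satisfied by P₂ mod p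
  have hODE : derivative (derivative P₂p) * X
      - C 16 * (derivative (derivative P₂p) * X * X)
      + derivative P₂p - C 16 * (derivative P₂p * X) + C 4 * P₂p = 0 := by
    ext m
    rcases m with _ | n
    · simp only [coeff_zero, coeff_add, coeff_sub, coeff_C_mul, mul_coeff_zero, coeff_X_zero,
        mul_zero, coeff_derivative, coeff_C_zero]
      have hm := hmaster 0
      push_cast at hm
      linear_combination hm
    · rcases n with _ | n
      · simp only [coeff_zero, coeff_add, coeff_sub, coeff_C_mul, coeff_mul_X, mul_coeff_zero,
          coeff_X_zero, mul_zero, coeff_derivative, coeff_C_zero]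
        have hm := hmaster 1
        push_cast at hm
        linear_combination hm
      · simp only [coeff_zero, coeff_add, coeff_sub, coeff_C_mul, coeff_mul_X, coeff_derivative]
        have hm := hmaster (n + 2)
        push_cast at hm ⊢
        linear_combination hm
  -- main argument
  clear hA1 hA2 hmaster key ha hrec hcrec ha0 hdvda hc
  apply EuclideanDomain.isCoprime_of_dvd
  · rintro ⟨h1, h2⟩
    rw [h2] at hP₂0
    simp at hP₂0
  intro z hz hz0 hz1 hz2
  obtain ⟨q₀, hq₀irr, hq₀dvd⟩ :=
    WfDvdMonoid.exists_irreducible_factor (by rwa [mem_nonunits_iff] at hz) hz0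
  have hq₀0 : q₀ ≠ 0 := hq₀irr.ne_zero
  set q : Polynomial (ZMod p) := q₀ * C (q₀.leadingCoeff)⁻¹ with hqdef
  have hlu : IsUnit (C (q₀.leadingCoeff)⁻¹) :=
    isUnit_C.mpr (isUnit_iff_ne_zero.mpr (inv_ne_zero (leadingCoeff_ne_zero.mpr hq₀0)))
  have hassoc : Associated q₀ q := ⟨hlu.unit, by rw [IsUnit.unit_spec]⟩
  have hmq : q.Monic := monic_mul_leadingCoeff_inv hq₀0
  have hqirr : Irreducible q := hassoc.irreducible hq₀irr
  have hqprime : Prime q := hqirr.prime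
  have hq1 : q ∣ P₁p := (hassoc.symm.dvd).trans (hq₀dvd.trans hz1)
  have hq2 : q ∣ P₂p := (hassoc.symm.dvd).trans (hq₀dvd.trans hz2)
  have hq0 : q ≠ 0 := hmq.ne_zero
  -- q does not divide X nor nonzero constants
  have hqC : ∀ x : ZMod p, x ≠ 0 → ¬ q ∣ C x := by
    intro x hx hdvd
    exact hqirr.not_isUnit (isUnit_of_dvd_unit hdvd (isUnit_C.mpr (isUnit_iff_ne_zero.mpr hx)))
  have hqX : ¬ q ∣ (X : Polynomial (ZMod p)) := by
    rintro ⟨v, hv⟩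
    rcases irreducible_X.isUnit_or_isUnit hv with h | h
    · exact hqirr.not_isUnit h
    · have hXq : (X : Polynomial (ZMod p)) ∣ q := by
        obtain ⟨w, hw2⟩ := h
        exact ⟨(↑w⁻¹ : Polynomial (ZMod p)),
          by rw [hv, ← hw2, mul_assoc, Units.mul_inv, mul_one]⟩
      have h0 := X_dvd_iff.mp (hXq.trans hq2)
      rw [h0] at hP₂0
      exact absurd hP₂0 (by norm_num)
  -- derivative of q is nonzero and not divisible by q
  have hdq : 0 < q.degree := degree_pos_of_irreducible hqirr
  have hd1 : 1 ≤ q.natDegree := natDegree_pos_iff_degree_pos.mpr hdq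
  have hdlt : q.natDegree < p := lt_of_le_of_lt (natDegree_le_of_dvd hq2 hP₂ne) hdegP₂
  have hq'ne : derivative q ≠ 0 := by
    intro h
    have hco : (derivative q).coeff (q.natDegree - 1) = 0 := by rw [h]; simp
    rw [coeff_derivative, Nat.sub_add_cancel hd1, hmq.coeff_natDegree, one_mul] at hco
    have hco' : ((q.natDegree - 1 + 1 : ℕ) : ZMod p) = 0 := by push_cast; exact hco
    rw [Nat.sub_add_cancel hd1] at hco'
    exact hne0 _ (by omega) hdlt hco'
  have hqq' : ¬ q ∣ derivative q := fun h =>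
    absurd ((Polynomial.degree_le_of_dvd h hq'ne).trans_lt (degree_derivative_lt hq0))
      (lt_irrefl _)
  -- extract the multiplicity of q in P₂
  have hfin := finiteMultiplicity_of_degree_pos_of_monic hdq hmq hP₂ne
  obtain ⟨u, hPu, hqu⟩ := hfin.exists_eq_pow_mul_and_not_dvd
  set e : ℕ := multiplicity q P₂p with he
  have heub : e < p := by
    have hdvd : q ^ e ∣ P₂p := ⟨u, hPu⟩
    have hle := natDegree_le_of_dvd hdvd hP₂ne
    rw [hmq.natDegree_pow] at hle
    calc e ≤ e * q.natDegree := Nat.le_mul_of_pos_right e (by omega)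
    _ ≤ P₂p.natDegree := hle
    _ < p := hdegP₂
  have he1 : 1 ≤ e := by
    by_contra h
    have h0 : e = 0 := by omega
    rw [h0, pow_zero, one_mul] at hPu
    exact hqu (hPu ▸ hq2)
  obtain ⟨f, hef⟩ : ∃ f, e = f + 1 := ⟨e - 1, by omega⟩
  rw [hef] at hPu
  -- first derivative factorization
  set s : Polynomial (ZMod p) :=
    C ((f + 1 : ℕ) : ZMod p) * (derivative q * u) + q * derivative u with hs
  have hD1 : derivative P₂p = q ^ f * s := by
    rw [hPu, derivative_mul, derivative_pow]
    simp only [Nat.add_sub_cancel, hs]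
    push_cast
    ring
  have hqs : ¬ q ∣ s := by
    intro h
    have h2 : q ∣ C ((f + 1 : ℕ) : ZMod p) * (derivative q * u) := by
      have h3 := h.sub (dvd_mul_right q (derivative u))
      simpa [hs] using h3
    rcases hqprime.dvd_mul.mp h2 with h4 | h4
    · exact hqC _ (hne0 (f + 1) (by omega) (by omega)) h4
    rcases hqprime.dvd_mul.mp h4 with h5 | h5
    · exact hqq' h5
    · exact hqu h5
  -- q divides the derivative of P₂
  have hqD1 : q ∣ derivative P₂p := by
    have hsub : C 2 * (derivative P₂p * X) = P₂p - P₁p := by rw [hrel]; ring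
    have h2 : q ∣ C 2 * (derivative P₂p * X) := hsub ▸ dvd_sub hq2 hq1
    rcases hqprime.dvd_mul.mp h2 with h | h
    · exact absurd h (hqC 2 h2ne)
    rcases hqprime.dvd_mul.mp h with h | h
    · exact h
    · exact absurd h hqX
  -- hence f ≥ 1
  obtain ⟨g, hfg⟩ : ∃ g, f = g + 1 := by
    rcases hqprime.dvd_mul.mp (hD1 ▸ hqD1) with h | h
    · rcases Nat.eq_zero_or_pos f with h0 | h0
      · rw [h0, pow_zero] at h
        exact absurd (isUnit_of_dvd_one h) hqirr.not_isUnit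
      · exact ⟨f - 1, by omega⟩
    · exact absurd h hqs
  -- second derivative factorization
  set t : Polynomial (ZMod p) :=
    C ((g + 1 : ℕ) : ZMod p) * (derivative q * s) + q * derivative s with ht
  have hD2 : derivative (derivative P₂p) = q ^ g * t := by
    rw [hD1, hfg, derivative_mul, derivative_pow]
    simp only [Nat.add_sub_cancel, ht]
    push_cast
    ring
  have hqt : ¬ q ∣ t := by
    intro h
    have h2 : q ∣ C ((g + 1 : ℕ) : ZMod p) * (derivative q * s) := by
      have h3 := h.sub (dvd_mul_right q (derivative s))
      simpa [ht] using h3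
    rcases hqprime.dvd_mul.mp h2 with h4 | h4
    · exact hqC _ (hne0 (g + 1) (by omega) (by omega)) h4
    rcases hqprime.dvd_mul.mp h4 with h5 | h5
    · exact hqq' h5
    · exact hqs h5
  -- substitute the factorizations into the ODE and cancel q^g
  rw [hD2, hD1, hfg] at hODE
  rw [hfg] at hPu
  rw [hPu] at hODE
  have hW : t * X - C 16 * (t * X * X) + q * s - C 16 * (q * s * X)
      + C 4 * (q * (q * u)) = 0 := by
    apply mul_left_cancel₀ (pow_ne_zero g hq0)
    rw [mul_zero]
    linear_combination hODE
  -- q divides t·X·(1 - 16X), so q is associated to 1 - 16X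
  have hqdvd : q ∣ t * X * (1 - C 16 * X) :=
    ⟨C 16 * (s * X) - s - C 4 * (q * u), by linear_combination hW⟩
  have hq16 : q ∣ 1 - C 16 * X := by
    rcases hqprime.dvd_mul.mp hqdvd with h | h
    · rcases hqprime.dvd_mul.mp h with h' | h'
      · exact absurd h' hqt
      · exact absurd h' hqX
    · exact h
  have h16X : C (-(16 : ZMod p)⁻¹) * (1 - C 16 * X) = X - C ((16 : ZMod p)⁻¹) := by
    have hcc : (-(16 : ZMod p)⁻¹) * 16 = -1 := by field_simp
    calc C (-(16 : ZMod p)⁻¹) * (1 - C 16 * X)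
        = C (-(16 : ZMod p)⁻¹) - C ((-(16 : ZMod p)⁻¹) * 16) * X := by rw [C_mul]; ring
      _ = X - C ((16 : ZMod p)⁻¹) := by
          rw [hcc]
          simp only [map_neg, map_one]
          ring
  have hqXα : q ∣ X - C ((16 : ZMod p)⁻¹) := h16X ▸ Dvd.dvd.mul_left hq16 _
  have hqeq : q = X - C ((16 : ZMod p)⁻¹) :=
    eq_of_monic_of_associated hmq (monic_X_sub_C _)
      (hqirr.associated_of_dvd (irreducible_X_sub_C _) hqXα)
  have hqfact : (1 : Polynomial (ZMod p)) - C 16 * X = C (-16) * q := by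
    rw [hqeq]
    have hcc : (-16 : ZMod p) * (16 : ZMod p)⁻¹ = -1 := by field_simp
    rw [mul_sub, ← C_mul, hcc]
    simp only [map_neg, map_one]
    ring
  have hinner : C (-16) * (t * X) + s - C 16 * (s * X) + C 4 * (q * u) = 0 := by
    apply mul_left_cancel₀ hq0
    rw [mul_zero]
    linear_combination hW - (t * X) * hqfact
  have hqlast : q ∣ C (-16) * (t * X) :=
    ⟨-(C (-16) * s) - C 4 * u, by linear_combination hinner - s * hqfact⟩
  rcases hqprime.dvd_mul.mp hqlast with h | h
  · exact hqC (-16) (neg_ne_zero.mpr h16ne) h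
  rcases hqprime.dvd_mul.mp h with h' | h'
  · exact hqt h'
  · exact hqX h'
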